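/- Define M(n,l) by the rook-Brauer recursion (M(n,n)=1, M(n,l)=0 for l>n, M(1,0)=1, M(n,0)=M(n-1,0)+M(n-1,1), M(n,l)=M(n-1,l-1)+M(n-1,l)+(l+1)·M(n-1,l+1) for 1≤l≤n-1). Then for every n ≥ 1, max over 0 ≤ l < n of M(n-1,l)/M(n,l) is attained at l = 0, i.e., M(n-1,l)·M(n,0) ≤ M(n,l)·M(n-1,0) for all 0 ≤ l < n. -/
import Mathlib


/-- For the rook-Brauer array `M`, the maximum of `M (n-1) l / M n l` over
`0 ≤ l < n` is attained at `l = 0`; equivalently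
`M (n-1) l * M n 0 ≤ M n l * M (n-1) 0` for all `0 ≤ l < n`. -/
theorem stmt15 (M : ℕ → ℕ → ℕ)
    (hdiag : ∀ n, M n n = 1)
    (hzero : ∀ n l, n < l → M n l = 0)
    (h10 : M 1 0 = 1)
    (hrec0 : ∀ n, 1 ≤ n → M n 0 = M (n - 1) 0 + M (n - 1) 1)
    (hrec : ∀ n l, 1 ≤ n → 1 ≤ l → l ≤ n - 1 →
      M n l = M (n - 1) (l - 1) + M (n - 1) l + (l + 1) * M (n - 1) (l + 1)) :
    ∀ n, 1 ≤ n → ∀ l, l < n →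
      M (n - 1) l * M n 0 ≤ M n l * M (n - 1) 0 := by
  -- binomial factorization: M n l = C(n,l) * M (n-l) 0
  have hB : ∀ n, ∀ l, l ≤ n → M n l = Nat.choose n l * M (n - l) 0 := by
    intro n
    induction n using Nat.strong_induction_on with
    | _ n ih =>
      intro l hl
      rcases Nat.eq_or_lt_of_le hl with heq | hlt
      · subst heq
        simp [hdiag]
      · rcases Nat.eq_zero_or_pos l with rfl | hlpos
        · simp
        · obtain ⟨k, rfl⟩ : ∃ k, n = k + 1 := ⟨n - 1, by omega⟩
          obtain ⟨j, rfl⟩ : ∃ j, l = j + 1 := ⟨l - 1, by omega⟩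
          have hjk : j + 1 ≤ k := by omega
          have hr : M (k + 1) (j + 1)
              = M k j + M k (j + 1) + (j + 1 + 1) * M k (j + 1 + 1) :=
            hrec (k + 1) (j + 1) (by omega) (by omega) (by omega)
          have e1 := ih k (by omega) j (by omega)
          have e2 := ih k (by omega) (j + 1) hjk
          rcases Nat.eq_or_lt_of_le hjk with hk | hk
          · -- k = j+1 : top subdiagonal case
            subst hk
            have hz : M (j + 1) (j + 1 + 1) = 0 := hzero _ _ (by omega)
            rw [hr, hz, e1, hdiag]
            rw [show j + 1 - j = 1 from by omega,
              show j + 1 + 1 - (j + 1) = 1 from by omega, h10,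
              Nat.choose_succ_self_right, Nat.choose_succ_self_right]
            ring
          · -- k ≥ j+2
            obtain ⟨m, rfl⟩ : ∃ m, k = j + 2 + m := ⟨k - j - 2, by omega⟩
            have e3 := ih (j + 2 + m) (by omega) (j + 2) (by omega)
            have e4 : M (m + 1) 1 = (m + 1) * M m 0 := by
              have := ih (m + 1) (by omega) 1 (by omega)
              simpa [Nat.choose_one_right] using this
            have ea : M (m + 2) 0 = M (m + 1) 0 + (m + 1) * M m 0 := by
              have h : M (m + 2) 0 = M (m + 1) 0 + M (m + 1) 1 :=
                hrec0 (m + 2) (by omega)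
              rw [h, e4]
            rw [show j + 2 + m - j = m + 2 from by omega] at e1
            rw [show j + 2 + m - (j + 1) = m + 1 from by omega] at e2
            rw [show j + 2 + m - (j + 2) = m from by omega] at e3
            rw [hr, e1, e2, e3,
              show j + 2 + m + 1 - (j + 1) = m + 2 from by omega, ea]
            have hch : Nat.choose (j + 2 + m) (j + 2) * (j + 2)
                = Nat.choose (j + 2 + m) (j + 1) * (m + 1) := by
              have h5 := Nat.choose_succ_right_eq (j + 2 + m) (j + 1)
              rw [show j + 2 + m - (j + 1) = m + 1 from by omega] at h5
              exact h5
            have hP : Nat.choose (j + 2 + m + 1) (j + 1)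
                = Nat.choose (j + 2 + m) j + Nat.choose (j + 2 + m) (j + 1) :=
              Nat.choose_succ_succ _ _
            rw [hP]
            have hq : (j + 1 + 1) * (Nat.choose (j + 2 + m) (j + 2) * M m 0)
                = Nat.choose (j + 2 + m) (j + 1) * ((m + 1) * M m 0) := by
              rw [← mul_assoc, mul_comm (j + 1 + 1), hch, mul_assoc]
            rw [hq]
            ring
  have a0 : M 0 0 = 1 := hdiag 0
  have e1 : ∀ m, M (m + 1) 1 = (m + 1) * M m 0 := by
    intro m
    simpa [Nat.choose_one_right] using hB (m + 1) 1 (by omega)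
  have arec : ∀ m, M (m + 2) 0 = M (m + 1) 0 + (m + 1) * M m 0 := by
    intro m
    have h : M (m + 2) 0 = M (m + 1) 0 + M (m + 1) 1 := hrec0 (m + 2) (by omega)
    rw [h, e1]
  have hpos : ∀ m, 1 ≤ M m 0 := by
    intro m
    induction m with
    | zero => omega
    | succ m ih =>
      have h : M (m + 1) 0 = M m 0 + M m 1 := hrec0 (m + 1) (by omega)
      omega
  have hmono : ∀ m, M m 0 ≤ M (m + 1) 0 := by
    intro m
    have h : M (m + 1) 0 = M m 0 + M m 1 := hrec0 (m + 1) (by omega)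
    omega
  -- coupled induction: log-convexity R and ratio-monotonicity S
  have RS : ∀ k, M (k + 1) 0 * M (k + 1) 0 ≤ M k 0 * M (k + 2) 0 ∧
      (k + 1) * (M k 0 * M (k + 2) 0) ≤ (k + 2) * (M (k + 1) 0 * M (k + 1) 0) := by
    intro k
    induction k with
    | zero =>
      have h2 := arec 0
      norm_num [a0, h10] at h2 ⊢
      omega
    | succ k ih =>
      obtain ⟨hR, hS⟩ := ih
      have r2 := arec k
      have r3 := arec (k + 1)
      rw [show k + 1 + 2 = k + 3 from by omega,
        show k + 1 + 1 = k + 2 from by omega] at r3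
      simp only [show k + 1 + 1 = k + 2 from by omega,
        show k + 1 + 2 = k + 3 from by omega]
      have r2' : M (k + 2) 0 * M (k + 2) 0
          = (M (k + 1) 0 + (k + 1) * M k 0) * M (k + 2) 0 := by rw [← r2]
      constructor
      · rw [r3]
        nlinarith [hS, r2']
      · rw [r3]
        have hx : M (k + 1) 0 * M (k + 1) 0 ≤ M (k + 1) 0 * M (k + 2) 0 :=
          Nat.mul_le_mul_left _ (hmono (k + 1))
        have hy : (k + 1) * (k + 3) * (M (k + 1) 0 * M (k + 1) 0)
            ≤ (k + 1) * (k + 3) * (M k 0 * M (k + 2) 0) :=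
          Nat.mul_le_mul_left _ hR
        nlinarith [hx, hy, r2']
  -- s-chain: (p+1) a(p) a(n) ≤ n a(n-1) a(p+1) for p+1 ≤ n
  have schain : ∀ p n, p + 1 ≤ n →
      (p + 1) * (M p 0 * M n 0) ≤ n * (M (n - 1) 0 * M (p + 1) 0) := by
    intro p n h
    induction n, h using Nat.le_induction with
    | base =>
      simp only [Nat.add_sub_cancel]
      exact le_of_eq (by ring)
    | succ n hn ih =>
      obtain ⟨q, rfl⟩ : ∃ q, n = q + 1 := ⟨n - 1, by omega⟩
      simp only [Nat.add_sub_cancel] at ih ⊢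
      simp only [show q + 1 + 1 = q + 2 from by omega]
      have hS := (RS q).2
      have hcancel : M (q + 1) 0 * ((p + 1) * (M p 0 * M (q + 2) 0))
          ≤ M (q + 1) 0 * ((q + 2) * (M (q + 1) 0 * M (p + 1) 0)) := by
        have c1 : (p + 1) * (M p 0 * M (q + 1) 0) * M (q + 2) 0
            ≤ (q + 1) * (M q 0 * M (p + 1) 0) * M (q + 2) 0 :=
          Nat.mul_le_mul_right _ ih
        have c2 : (q + 1) * (M q 0 * M (q + 2) 0) * M (p + 1) 0
            ≤ (q + 2) * (M (q + 1) 0 * M (q + 1) 0) * M (p + 1) 0 :=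
          Nat.mul_le_mul_right _ hS
        nlinarith [c1, c2]
      exact Nat.le_of_mul_le_mul_left hcancel (hpos (q + 1))
  -- conclusion
  intro n hn l hln
  obtain ⟨k, rfl⟩ : ∃ k, n = k + 1 := ⟨n - 1, by omega⟩
  simp only [Nat.add_sub_cancel]
  have hlk : l ≤ k := by omega
  rw [hB k l hlk, hB (k + 1) l (by omega)]
  obtain ⟨m, rfl⟩ : ∃ m, k = l + m := ⟨k - l, by omega⟩
  rw [show l + m - l = m from by omega, show l + m + 1 - l = m + 1 from by omega]
  have hsc := schain m (l + m + 1) (by omega)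
  simp only [Nat.add_sub_cancel] at hsc
  have hid : (l + m + 1) * Nat.choose (l + m) l
      = Nat.choose (l + m + 1) l * (m + 1) := by
    have h3 := Nat.add_one_mul_choose_eq (l + m) l
    have h4 := Nat.choose_succ_right_eq (l + m + 1) l
    rw [show l + m + 1 - l = m + 1 from by omega] at h4
    calc (l + m + 1) * Nat.choose (l + m) l
        = Nat.succ (l + m) * Nat.choose (l + m) l := rfl
      _ = Nat.choose (l + m + 1) (l + 1) * (l + 1) := h3
      _ = Nat.choose (l + m + 1) l * (m + 1) := h4
  have key : (m + 1) * (Nat.choose (l + m) l * M m 0 * M (l + m + 1) 0)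
      ≤ (m + 1) * (Nat.choose (l + m + 1) l * M (m + 1) 0 * M (l + m) 0) := by
    calc (m + 1) * (Nat.choose (l + m) l * M m 0 * M (l + m + 1) 0)
        = Nat.choose (l + m) l * ((m + 1) * (M m 0 * M (l + m + 1) 0)) := by ring
      _ ≤ Nat.choose (l + m) l * ((l + m + 1) * (M (l + m) 0 * M (m + 1) 0)) :=
          Nat.mul_le_mul_left _ hsc
      _ = ((l + m + 1) * Nat.choose (l + m) l) * (M (l + m) 0 * M (m + 1) 0) := by
          ring
      _ = (Nat.choose (l + m + 1) l * (m + 1)) * (M (l + m) 0 * M (m + 1) 0) := by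
          rw [hid]
      _ = (m + 1) * (Nat.choose (l + m + 1) l * M (m + 1) 0 * M (l + m) 0) := by
          ring
  exact Nat.le_of_mul_le_mul_left key (by omega)
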